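/- As τ → 1⁻, the τ-expectile of a bounded random variable X converges to the essential supremum of X; as τ → 0⁺, it converges to the essential infimum of X. -/

import Mathlib

open MeasureTheory Set Filter
open scoped NNReal ENNReal

lemma expectile_aux
    {Ω : Type*} [MeasurableSpace Ω] (μ : Measure Ω) [IsProbabilityMeasure μ]
    (X : Ω → ℝ) (hX : MemLp X ⊤ μ)
    (e : ℝ → ℝ)
    (he : ∀ τ ∈ Set.Ioo (0 : ℝ) 1,
      τ * ∫ ω, max (X ω - e τ) 0 ∂μ = (1 - τ) * ∫ ω, max (e τ - X ω) 0 ∂μ) :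
    Tendsto e (nhdsWithin 1 (Set.Iio 1)) (nhds (essSup X μ)) := by
  classical
  -- measurable version of X
  set Y : Ω → ℝ := hX.1.mk X with hYdef
  have hYmeas : Measurable Y := hX.1.stronglyMeasurable_mk.measurable
  have hXY : X =ᵐ[μ] Y := hX.1.ae_eq_mk
  have hYℒ : MemLp Y ⊤ μ := hX.ae_eq hXY
  -- a.e. bound
  obtain ⟨C, hC⟩ : ∃ C : ℝ≥0, ∀ᵐ ω ∂μ, ‖Y ω‖₊ ≤ C := by
    have h := hYℒ.2
    rw [eLpNorm_exponent_top, eLpNormEssSup_lt_top_iff_isBoundedUnder] at h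
    obtain ⟨C, hC⟩ := h
    exact ⟨C, hC⟩
  have hbound : ∀ᵐ ω ∂μ, |Y ω| ≤ (C : ℝ) := by
    filter_upwards [hC] with ω h
    exact_mod_cast h
  have hbddAbove : IsBoundedUnder (· ≤ ·) (ae μ) Y :=
    ⟨(C : ℝ), hbound.mono fun ω h => (abs_le.1 h).2⟩
  have hbddBelow : IsBoundedUnder (· ≥ ·) (ae μ) Y :=
    ⟨-(C : ℝ), hbound.mono fun ω h => (abs_le.1 h).1⟩
  set M : ℝ := essSup Y μ with hMdef
  set m : ℝ := essInf Y μ with hmdef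
  have hMX : essSup X μ = M := essSup_congr_ae hXY
  have hYleM : ∀ᵐ ω ∂μ, Y ω ≤ M := ae_le_essSup hbddAbove
  have hmleY : ∀ᵐ ω ∂μ, m ≤ Y ω := ae_essInf_le hbddBelow
  have hYint : Integrable Y μ := hYℒ.integrable le_top
  -- integrability of the positive parts
  have hintf : ∀ q : ℝ, Integrable (fun ω => max (Y ω - q) 0) μ := fun q =>
    (hYint.sub (integrable_const q)).pos_part
  have hintg : ∀ q : ℝ, Integrable (fun ω => max (q - Y ω) 0) μ := fun q =>
    ((integrable_const q).sub hYint).pos_part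
  -- rewrite he in terms of Y
  have heY : ∀ τ ∈ Set.Ioo (0 : ℝ) 1,
      τ * ∫ ω, max (Y ω - e τ) 0 ∂μ = (1 - τ) * ∫ ω, max (e τ - Y ω) 0 ∂μ := by
    intro τ hτ
    have h1 : ∫ ω, max (X ω - e τ) 0 ∂μ = ∫ ω, max (Y ω - e τ) 0 ∂μ :=
      integral_congr_ae (by filter_upwards [hXY] with ω h; rw [h])
    have h2 : ∫ ω, max (e τ - X ω) 0 ∂μ = ∫ ω, max (e τ - Y ω) 0 ∂μ :=
      integral_congr_ae (by filter_upwards [hXY] with ω h; rw [h])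
    rw [← h1, ← h2]; exact he τ hτ
  -- mean bounds
  have hmeanM : ∫ ω, Y ω ∂μ ≤ M := by
    calc ∫ ω, Y ω ∂μ ≤ ∫ _ω, M ∂μ := integral_mono_ae hYint (integrable_const M) hYleM
    _ = M := by simp
  have hmmean : m ≤ ∫ ω, Y ω ∂μ := by
    calc m = ∫ _ω, m ∂μ := by simp
    _ ≤ ∫ ω, Y ω ∂μ := integral_mono_ae (integrable_const m) hYint hmleY
  have hmM : m ≤ M := hmmean.trans hmeanM
  -- upper bound e τ ≤ M
  have hub : ∀ τ ∈ Set.Ioo (0 : ℝ) 1, e τ ≤ M := by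
    intro τ hτ
    by_contra hcon
    push_neg at hcon
    have hf0 : ∫ ω, max (Y ω - e τ) 0 ∂μ = 0 := by
      have hz : (fun ω => max (Y ω - e τ) 0) =ᵐ[μ] 0 := by
        filter_upwards [hYleM] with ω h
        have hle0 : Y ω - e τ ≤ 0 := by linarith
        simp [max_eq_right hle0]
      rw [integral_congr_ae hz]; simp
    have hg0 : ∫ ω, max (e τ - Y ω) 0 ∂μ = 0 := by
      have := heY τ hτ
      rw [hf0, mul_zero] at this
      have h1τ : (1:ℝ) - τ ≠ 0 := by have := hτ.2; intro h; linarith [hτ.2]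
      replace this := mul_eq_zero.mp this.symm
      rcases this with h | h
      · exact absurd h h1τ
      · exact h
    have hglb : e τ - ∫ ω, Y ω ∂μ ≤ ∫ ω, max (e τ - Y ω) 0 ∂μ := by
      calc e τ - ∫ ω, Y ω ∂μ = ∫ ω, (e τ - Y ω) ∂μ := by
            rw [integral_sub (integrable_const _) hYint]; simp
      _ ≤ ∫ ω, max (e τ - Y ω) 0 ∂μ :=
            integral_mono ((integrable_const _).sub hYint) (hintg _)
              (fun ω => le_max_left _ _)
    rw [hg0] at hglb
    linarith
  -- main quantitative step
  rw [hMX]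
  rw [Metric.tendsto_nhds]
  intro ε hε
  -- positive measure of {Y > M - ε/2}
  set A : Set Ω := {ω | M - ε/2 < Y ω} with hA
  have hAmeas : MeasurableSet A := measurableSet_lt measurable_const hYmeas
  have hApos : 0 < (μ A).toReal := by
    rcases eq_or_ne (μ A) 0 with h0 | h0
    · exfalso
      have hle : ∀ᵐ ω ∂μ, Y ω ≤ M - ε/2 := by
        rw [ae_iff]
        convert h0 using 2
        ext ω; simp [hA, not_le]
      have hne : (ae μ).NeBot := ae_neBot.2 (IsProbabilityMeasure.ne_zero μ)
      have : M ≤ M - ε/2 :=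
        limsup_le_of_le hbddBelow.isCoboundedUnder_le hle
      linarith
    · have hlt : μ A < ⊤ := lt_of_le_of_lt (measure_mono (subset_univ A)) (by simp)
      exact ENNReal.toReal_pos h0 hlt.ne
  set c : ℝ := (ε/2) * (μ A).toReal with hc
  have hcpos : 0 < c := by positivity
  set K : ℝ := M - m with hK
  have hKnn : 0 ≤ K := by simp [hK]; linarith
  -- lower bound on f(q) for q ≤ M - ε
  have hflb : ∀ q : ℝ, q ≤ M - ε → c ≤ ∫ ω, max (Y ω - q) 0 ∂μ := by
    intro q hq
    have : ∫ ω, A.indicator (fun _ => ε/2) ω ∂μ ≤ ∫ ω, max (Y ω - q) 0 ∂μ := by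
      refine integral_mono ?_ (hintf q) ?_
      · exact (integrable_const (ε/2)).indicator hAmeas
      · intro ω
        by_cases hω : ω ∈ A
        · have h1 : M - ε/2 < Y ω := hω
          have h2 : ε/2 ≤ Y ω - q := by linarith
          rw [Set.indicator_of_mem hω]
          exact h2.trans (le_max_left _ _)
        · rw [Set.indicator_of_notMem hω]
          exact le_max_right _ _
    rwa [integral_indicator_const _ hAmeas, smul_eq_mul, mul_comm] at this
    
  -- upper bound on g(q) for q ≤ M
  have hgub : ∀ q : ℝ, q ≤ M → ∫ ω, max (q - Y ω) 0 ∂μ ≤ K := by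
    intro q hq
    calc ∫ ω, max (q - Y ω) 0 ∂μ ≤ ∫ _ω, K ∂μ := by
          refine integral_mono_ae (hintg q) (integrable_const K) ?_
          filter_upwards [hmleY] with ω h
          apply max_le
          · rw [hK]; linarith
          · exact hKnn
    _ = K := by simp
  -- choose δ
  set δ : ℝ := c / (K + c) with hδ
  have hδpos : 0 < δ := div_pos hcpos (by linarith)
  have hδle : δ ≤ 1 := by
    rw [hδ, div_le_one (by linarith)]
    linarith
  have hmem : Set.Ioo (1 - δ) 1 ∈ nhdsWithin (1:ℝ) (Set.Iio 1) :=
    Ioo_mem_nhdsLT_of_mem ⟨by linarith, le_refl 1⟩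
  filter_upwards [hmem] with τ hτ
  have hτ01 : τ ∈ Set.Ioo (0:ℝ) 1 := ⟨by have := hτ.1; nlinarith, hτ.2⟩
  have hub' := hub τ hτ01
  have hlow : M - ε < e τ := by
    by_contra hcon
    push_neg at hcon
    have h1 := hflb (e τ) hcon
    have h2 := hgub (e τ) hub'
    have h3 := heY τ hτ01
    have h4 : τ * c ≤ τ * ∫ ω, max (Y ω - e τ) 0 ∂μ :=
      mul_le_mul_of_nonneg_left h1 (le_of_lt hτ01.1)
    have h5 : (1 - τ) * ∫ ω, max (e τ - Y ω) 0 ∂μ ≤ (1 - τ) * K :=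
      mul_le_mul_of_nonneg_left h2 (by have := hτ01.2; linarith)
    -- τ * c > (1 - τ) * K since 1 - τ < δ
    have h6 : 1 - τ < δ := by have := hτ.1; linarith
    have h7 : (1 - τ) * K ≤ δ * K := mul_le_mul_of_nonneg_right h6.le hKnn
    have h8 : δ * K < τ * c := by
      have hKc : K + c ≠ 0 := by positivity
      have h1δ : (1 - δ) * c = δ * K := by
        rw [hδ]; field_simp; ring
      have h9 : (1 - δ) * c < τ * c := mul_lt_mul_of_pos_right hτ.1 hcpos
      linarith
    linarith
  have : dist (e τ) M = M - e τ := by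
    rw [Real.dist_eq, abs_of_nonpos (by linarith)]; ring
  rw [this]
  linarith

lemma essSup_neg_eq {Ω : Type*} [MeasurableSpace Ω] (μ : Measure Ω) (X : Ω → ℝ) :
    essSup (fun ω => -X ω) μ = - essInf X μ := by
  rw [essSup_eq_sInf, essInf_eq_sSup]
  have hset : {a : ℝ | μ {x | a < -X x} = 0} = -{b : ℝ | μ {x | X x < b} = 0} := by
    ext a
    simp only [Set.mem_setOf_eq, Set.mem_neg]
    constructor
    · intro h; convert h using 2; ext x; simp only [Set.mem_setOf_eq]; constructor <;> intro <;> linarith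
    · intro h; convert h using 2; ext x; simp only [Set.mem_setOf_eq]; constructor <;> intro <;> linarith
  rw [hset, Real.sInf_def, neg_neg]

/-- As τ → 1⁻ the τ-expectile of a bounded random variable X converges to
the essential supremum of X; as τ → 0⁺ it converges to the essential infimum of X.
Here e : ℝ → ℝ assigns to each τ ∈ (0,1) the τ-expectile of X, characterized by the
first-order condition. -/
theorem expectile_tendsto_essSup_essInf
    {Ω : Type*} [MeasurableSpace Ω] (μ : Measure Ω) [IsProbabilityMeasure μ]
    (X : Ω → ℝ) (hX : MemLp X ⊤ μ)
    (e : ℝ → ℝ)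
    (he : ∀ τ ∈ Set.Ioo (0 : ℝ) 1,
      τ * ∫ ω, max (X ω - e τ) 0 ∂μ = (1 - τ) * ∫ ω, max (e τ - X ω) 0 ∂μ) :
    Tendsto e (nhdsWithin 1 (Set.Iio 1)) (nhds (essSup X μ)) ∧
    Tendsto e (nhdsWithin 0 (Set.Ioi 0)) (nhds (essInf X μ)) := by
  constructor
  · exact expectile_aux μ X hX e he
  · -- apply the aux lemma to -X with e' τ = -e (1 - τ)
    have hXneg : MemLp (fun ω => -X ω) ⊤ μ := hX.neg
    have he' : ∀ τ ∈ Set.Ioo (0 : ℝ) 1,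
        τ * ∫ ω, max ((-X ω) - (fun τ => -e (1 - τ)) τ) 0 ∂μ
          = (1 - τ) * ∫ ω, max ((fun τ => -e (1 - τ)) τ - (-X ω)) 0 ∂μ := by
      intro τ hτ
      have h1τ : (1 - τ) ∈ Set.Ioo (0:ℝ) 1 := ⟨by linarith [hτ.2], by linarith [hτ.1]⟩
      have h := he (1 - τ) h1τ
      simp only []
      have e1 : (fun ω => max ((-X ω) - (-e (1 - τ))) 0) = fun ω => max (e (1 - τ) - X ω) 0 := by
        ext ω; ring_nf
      have e2 : (fun ω => max ((-e (1 - τ)) - (-X ω)) 0) = fun ω => max (X ω - e (1 - τ)) 0 := by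
        ext ω; ring_nf
      calc τ * ∫ ω, max ((-X ω) - (-e (1 - τ))) 0 ∂μ
          = τ * ∫ ω, max (e (1 - τ) - X ω) 0 ∂μ := by rw [e1]
        _ = (1 - (1 - τ)) * ∫ ω, max (e (1 - τ) - X ω) 0 ∂μ := by ring_nf
        _ = (1 - τ) * ∫ ω, max (X ω - e (1 - τ)) 0 ∂μ := by
            exact h.symm
        _ = (1 - τ) * ∫ ω, max ((-e (1 - τ)) - (-X ω)) 0 ∂μ := by rw [e2]
    have haux := expectile_aux μ (fun ω => -X ω) hXneg (fun τ => -e (1 - τ)) he'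
    rw [essSup_neg_eq] at haux
    -- compose with τ ↦ 1 - τ : 𝓝[>] 0 → 𝓝[<] 1
    have hmap : Tendsto (fun τ : ℝ => 1 - τ) (nhdsWithin 0 (Set.Ioi 0))
        (nhdsWithin 1 (Set.Iio 1)) := by
      apply tendsto_nhdsWithin_of_tendsto_nhds_of_eventually_within
      · have : Tendsto (fun τ : ℝ => 1 - τ) (nhds 0) (nhds (1 - 0)) :=
          (continuous_const.sub continuous_id).tendsto 0
        simpa using this.mono_left nhdsWithin_le_nhds
      · filter_upwards [self_mem_nhdsWithin] with τ (hτ : 0 < τ)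
        simp [Set.mem_Iio]; linarith
    have hcomp := haux.comp hmap
    have : (fun τ => -e (1 - (1 - τ))) = fun τ => -e τ := by ext τ; ring_nf
    have hfinal : Tendsto (fun τ => -e τ) (nhdsWithin 0 (Set.Ioi 0)) (nhds (- essInf X μ)) := by
      have : ((fun τ => -e (1 - τ)) ∘ fun τ : ℝ => 1 - τ) = fun τ => -e τ := by
        ext τ; simp
      rwa [this] at hcomp
    have := hfinal.neg
    simpa using this
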